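/- Let p be an odd prime and r ≥ 1. The number of distinct multisets 𝔐_{p,r,a}(b) in Z/p^rZ with a = p^{r−1}, as b ranges over units modulo p^r, is exactly p^{r−1}·(p−1)/2; for p = 2 and r ≥ 2 it is 2^{r−2}. -/

import Mathlib

namespace Stmt14Aux

def nn (p r : ℕ) (b : (ZMod (p ^ r))ˣ) : ℕ :=
  ((p : ZMod (p ^ r)) ^ (r - 1) * (↑b⁻¹ : ZMod (p ^ r)) - 1).val

def f (p r : ℕ) (b : (ZMod (p ^ r))ˣ) : Multiset (ZMod (p ^ r)) :=
  Multiset.replicate (nn p r b) (↑b : ZMod (p ^ r)) +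
    Multiset.replicate (p ^ r - 2 - nn p r b) (-(↑b : ZMod (p ^ r)))

lemma cast_pow_ne_zero {p r : ℕ} (hp : p.Prime) (hr : 1 ≤ r) :
    ((p : ZMod (p ^ r)) ^ (r - 1)) ≠ 0 := by
  haveI : NeZero (p ^ r) := ⟨(Nat.pow_pos (n := r) hp.pos).ne'⟩
  rw [← Nat.cast_pow, Ne, ZMod.natCast_eq_zero_iff]
  intro hdvd
  exact absurd (Nat.le_of_dvd (Nat.pow_pos hp.pos) hdvd)
    (not_le.mpr (Nat.pow_lt_pow_right hp.one_lt (by omega)))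

lemma nn_le {p r : ℕ} (hp : p.Prime) (hr : 1 ≤ r) (b : (ZMod (p ^ r))ˣ) :
    nn p r b ≤ p ^ r - 2 := by
  haveI : NeZero (p ^ r) := ⟨(Nat.pow_pos (n := r) hp.pos).ne'⟩
  have h2 : 2 ≤ p ^ r := hp.two_le.trans (Nat.le_self_pow (by omega) p)
  have hlt := ZMod.val_lt ((p : ZMod (p ^ r)) ^ (r - 1) * (↑b⁻¹ : ZMod (p ^ r)) - 1)
  have hne : ((p : ZMod (p ^ r)) ^ (r - 1) * (↑b⁻¹ : ZMod (p ^ r)) - 1) ≠ -1 := by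
    intro h
    have h0 : (p : ZMod (p ^ r)) ^ (r - 1) * (↑b⁻¹ : ZMod (p ^ r)) = 0 := by
      have := congrArg (· + 1) h; simpa using this
    have hz : (p : ZMod (p ^ r)) ^ (r - 1) = 0 := by
      have := congrArg (· * (↑b : ZMod (p ^ r))) h0
      simpa [mul_assoc, ZMod.inv_mul_of_unit _ b.isUnit] using this
    exact cast_pow_ne_zero hp hr hz
  have hvne : nn p r b ≠ p ^ r - 1 := by
    intro h
    apply hne
    have hx : ((nn p r b : ℕ) : ZMod (p ^ r))
        = (p : ZMod (p ^ r)) ^ (r - 1) * (↑b⁻¹ : ZMod (p ^ r)) - 1 := by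
      simp [nn, ZMod.natCast_val, ZMod.cast_id]
    rw [← hx, h, Nat.cast_sub (by omega), Nat.cast_one]
    simp [ZMod.natCast_self]
  unfold nn at *
  omega


lemma nn_neg {p r : ℕ} (hp : p.Prime) (hr : 1 ≤ r) (b : (ZMod (p ^ r))ˣ) :
    nn p r (-b) = p ^ r - 2 - nn p r b := by
  haveI : NeZero (p ^ r) := ⟨(Nat.pow_pos (n := r) hp.pos).ne'⟩
  have h2 : 2 ≤ p ^ r := hp.two_le.trans (Nat.le_self_pow (by omega) p)
  have hle := nn_le hp hr b
  have hx : ((nn p r b : ℕ) : ZMod (p ^ r))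
      = (p : ZMod (p ^ r)) ^ (r - 1) * (↑b⁻¹ : ZMod (p ^ r)) - 1 := by
    simp [nn, ZMod.natCast_val, ZMod.cast_id]
  have key : (p : ZMod (p ^ r)) ^ (r - 1) * (↑(-b)⁻¹ : ZMod (p ^ r)) - 1
      = ((p ^ r - 2 - nn p r b : ℕ) : ZMod (p ^ r)) := by
    rw [Nat.cast_sub (by omega), Nat.cast_sub (by omega), hx, ZMod.natCast_self]
    simp only [inv_neg, Units.val_neg]
    ring
  rw [nn, key, ZMod.val_cast_of_lt (by omega)]

lemma f_neg {p r : ℕ} (hp : p.Prime) (hr : 1 ≤ r) (b : (ZMod (p ^ r))ˣ) :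
    f p r (-b) = f p r b := by
  have hle := nn_le hp hr b
  rw [f, f, nn_neg hp hr b]
  have h1 : p ^ r - 2 - (p ^ r - 2 - nn p r b) = nn p r b := by omega
  rw [h1, Units.val_neg, neg_neg, add_comm]

lemma f_mem {p r : ℕ} {b : (ZMod (p ^ r))ˣ} {x : ZMod (p ^ r)}
    (hx : x ∈ f p r b) : x = ↑b ∨ x = -↑b := by
  rcases Multiset.mem_add.mp hx with h | h
  · exact Or.inl (Multiset.eq_of_mem_replicate h)
  · exact Or.inr (Multiset.eq_of_mem_replicate h)

lemma f_ne_zero {p r : ℕ} (hp : p.Prime) (hr : 1 ≤ r) (h3 : 3 ≤ p ^ r)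
    (b : (ZMod (p ^ r))ˣ) : f p r b ≠ 0 := by
  intro h
  have := congrArg Multiset.card h
  rw [f, Multiset.card_add, Multiset.card_replicate, Multiset.card_replicate,
    Multiset.card_zero] at this
  have hle := nn_le hp hr b
  omega

lemma f_inj {p r : ℕ} (hp : p.Prime) (hr : 1 ≤ r) (h3 : 3 ≤ p ^ r)
    {b b' : (ZMod (p ^ r))ˣ} (h : f p r b' = f p r b) : b' = b ∨ b' = -b := by
  obtain ⟨x, hx⟩ := Multiset.exists_mem_of_ne_zero (f_ne_zero hp hr h3 b')
  have hx' : x ∈ f p r b := h ▸ hx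
  rcases f_mem hx with h1 | h1 <;> rcases f_mem hx' with h2 | h2
  · exact Or.inl (Units.ext (h1 ▸ h2))
  · refine Or.inr (Units.ext ?_); rw [Units.val_neg, ← h1, h2]
  · refine Or.inr (Units.ext ?_)
    rw [Units.val_neg, ← h2, ← neg_neg (↑b' : ZMod (p ^ r)), h1]
  · refine Or.inl (Units.ext ?_)
    have := h1.symm.trans h2
    exact neg_injective this

lemma neg_ne {p r : ℕ} (hp : p.Prime) (hr : 1 ≤ r) (h3 : 3 ≤ p ^ r)
    (b : (ZMod (p ^ r))ˣ) : -b ≠ b := by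
  haveI : NeZero (p ^ r) := ⟨(Nat.pow_pos (n := r) hp.pos).ne'⟩
  intro h
  have h2 : ((2 : ℕ) : ZMod (p ^ r)) = 0 := by
    have hb : (-(↑b : ZMod (p ^ r))) = ↑b := by rw [← Units.val_neg, h]
    have hbb : (↑b : ZMod (p ^ r)) + ↑b = 0 := by linear_combination -hb
    have := congrArg (· * (↑b⁻¹ : ZMod (p ^ r))) hbb
    simp only [add_mul, ← Units.val_mul, mul_inv_cancel, Units.val_one, zero_mul] at this
    push_cast
    linear_combination this
  rw [ZMod.natCast_eq_zero_iff] at h2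
  have := Nat.le_of_dvd (by omega) h2
  omega


lemma key {p r : ℕ} (hp : p.Prime) (hr : 1 ≤ r) (h3 : 3 ≤ p ^ r) :
    {M : Multiset (ZMod (p ^ r)) | ∃ b : (ZMod (p ^ r))ˣ, M = f p r b}.ncard
      = (p ^ r).totient / 2 := by
  haveI : NeZero (p ^ r) := ⟨(Nat.pow_pos (n := r) hp.pos).ne'⟩
  classical
  have hset : {M : Multiset (ZMod (p ^ r)) | ∃ b : (ZMod (p ^ r))ˣ, M = f p r b}
      = ↑(Finset.univ.image (f p r)) := by
    ext M; simp [eq_comm]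
  rw [hset, Set.ncard_coe_finset]
  have hsum : ∀ M ∈ Finset.univ.image (f p r),
      (Finset.univ.filter (fun b' => f p r b' = M)).card = 2 := by
    intro M hM
    obtain ⟨b, -, rfl⟩ := Finset.mem_image.mp hM
    have hfib : Finset.univ.filter (fun b' => f p r b' = f p r b) = {b, -b} := by
      ext b'
      simp only [Finset.mem_filter, Finset.mem_univ, true_and, Finset.mem_insert,
        Finset.mem_singleton]
      constructor
      · exact f_inj hp hr h3
      · rintro (rfl | rfl)
        · rfl
        · exact f_neg hp hr b
    rw [hfib, Finset.card_insert_of_notMem (by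
      simp only [Finset.mem_singleton]
      exact fun h => neg_ne hp hr h3 b (by simpa using h.symm)), Finset.card_singleton]
  have htot := Finset.card_eq_sum_card_fiberwise
    (s := (Finset.univ : Finset (ZMod (p ^ r))ˣ)) (t := Finset.univ.image (f p r))
    (f := f p r) (fun b _ => Finset.mem_image_of_mem _ (Finset.mem_univ b))
  rw [Finset.sum_congr rfl hsum, Finset.sum_const, smul_eq_mul] at htot
  have hcardu : (Finset.univ : Finset (ZMod (p ^ r))ˣ).card = (p ^ r).totient := by
    rw [Finset.card_univ, ZMod.card_units_eq_totient]
  omega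

end Stmt14Aux




/-- The number of distinct multisets 𝔐_{p,r,a}(b) (a = p^(r−1)), as b ranges over
units mod p^r, is p^(r−1)(p−1)/2 for odd p, and 2^(r−2) for p = 2, r ≥ 2. -/
theorem stmt_14 (p : ℕ) (hp : p.Prime) (r : ℕ) (hr : 1 ≤ r) :
    (Odd p →
      {M : Multiset (ZMod (p ^ r)) | ∃ b : (ZMod (p ^ r))ˣ,
          M = Multiset.replicate
                (((p : ZMod (p ^ r)) ^ (r - 1) * (↑b⁻¹ : ZMod (p ^ r)) - 1).val)
                (b : ZMod (p ^ r)) +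
              Multiset.replicate
                (p ^ r - 2 -
                  ((p : ZMod (p ^ r)) ^ (r - 1) * (↑b⁻¹ : ZMod (p ^ r)) - 1).val)
                (-(b : ZMod (p ^ r)))}.ncard = p ^ (r - 1) * (p - 1) / 2) ∧
    (p = 2 → 2 ≤ r →
      {M : Multiset (ZMod (p ^ r)) | ∃ b : (ZMod (p ^ r))ˣ,
          M = Multiset.replicate
                (((p : ZMod (p ^ r)) ^ (r - 1) * (↑b⁻¹ : ZMod (p ^ r)) - 1).val)
                (b : ZMod (p ^ r)) +
              Multiset.replicate
                (p ^ r - 2 -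
                  ((p : ZMod (p ^ r)) ^ (r - 1) * (↑b⁻¹ : ZMod (p ^ r)) - 1).val)
                (-(b : ZMod (p ^ r)))}.ncard = 2 ^ (r - 2)) := by
  constructor
  · intro hodd
    have hp3 : 3 ≤ p := by
      rcases hodd with ⟨k, hk⟩; have := hp.two_le; omega
    have h3 : 3 ≤ p ^ r := hp3.trans (Nat.le_self_pow (by omega) p)
    have hk := Stmt14Aux.key hp hr h3
    rw [Nat.totient_prime_pow hp hr] at hk
    exact hk
  · intro hp2 hr2
    subst hp2
    have h3 : 3 ≤ 2 ^ r := by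
      calc (3:ℕ) ≤ 2 ^ 2 := by norm_num
        _ ≤ 2 ^ r := Nat.pow_le_pow_right (by norm_num) hr2
    have hk := Stmt14Aux.key hp hr h3
    rw [Nat.totient_prime_pow hp hr, show r - 1 = (r - 2) + 1 from by omega,
      pow_succ] at hk
    simpa [Stmt14Aux.f, Stmt14Aux.nn] using hk
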